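/- Let q > 0 and let u : [0,1] → ℝ be a twice continuously differentiable solution of u'' + q·e^u = 0 on [0,1] with u'(0) = 0 and u(1) = 0. Then there exists μ > 0 with cosh(μ) = √(2/q)·μ such that u(x) = ln(2μ²/q) − 2·ln(cosh(μx)) for all x ∈ [0,1]. -/

import Mathlib

/-- Any twice continuously differentiable solution of the BVP
`u'' + q·e^u = 0` on `[0,1]`, `u'(0) = 0`, `u(1) = 0` (with `q > 0`) has the form
`u(x) = ln(2μ²/q) − 2·ln(cosh(μx))` for some `μ > 0` with `cosh μ = √(2/q)·μ`. -/
theorem thermal_explosion_solution_form (q : ℝ) (hq : 0 < q) (u : ℝ → ℝ)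
    (hu : ContDiffOn ℝ 2 u (Set.Icc 0 1))
    (heq : ∀ x ∈ Set.Icc (0 : ℝ) 1,
      derivWithin (derivWithin u (Set.Icc 0 1)) (Set.Icc 0 1) x + q * Real.exp (u x) = 0)
    (hbc0 : derivWithin u (Set.Icc 0 1) 0 = 0)
    (hbc1 : u 1 = 0) :
    ∃ μ : ℝ, 0 < μ ∧ Real.cosh μ = Real.sqrt (2 / q) * μ ∧
      ∀ x ∈ Set.Icc (0 : ℝ) 1,
        u x = Real.log (2 * μ ^ 2 / q) - 2 * Real.log (Real.cosh (μ * x)) := by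
  have hsu : UniqueDiffOn ℝ (Set.Icc (0:ℝ) 1) := uniqueDiffOn_Icc one_pos
  set s : Set ℝ := Set.Icc (0:ℝ) 1 with hsdef
  have h0s : (0:ℝ) ∈ s := by constructor <;> norm_num
  have h1s : (1:ℝ) ∈ s := by constructor <;> norm_num
  set u' := derivWithin u s with hu'def
  have hud : DifferentiableOn ℝ u s := hu.differentiableOn (by norm_num)
  have hu'c : ContDiffOn ℝ 1 u' s := hu.derivWithin hsu (by norm_num)
  have hu'd : DifferentiableOn ℝ u' s := hu'c.differentiableOn (by norm_num)
  have Hu : ∀ x ∈ s, HasDerivWithinAt u (u' x) s x :=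
    fun x hx => (hud x hx).hasDerivWithinAt
  have Hu' : ∀ x ∈ s, HasDerivWithinAt u' (-(q * Real.exp (u x))) s x := by
    intro x hx
    have h2 := heq x hx
    have h3 : derivWithin u' s x = -(q * Real.exp (u x)) := by
      rw [hu'def]; linarith
    have := (hu'd x hx).hasDerivWithinAt
    rwa [h3] at this
  -- Energy conservation
  set E : ℝ → ℝ := fun y => u' y * u' y + 2*q*Real.exp (u y) with hEdef
  have HE : ∀ x ∈ s, HasDerivWithinAt E 0 s x := by
    intro x hx
    have h1 := ((Hu' x hx).mul (Hu' x hx)).add (((Hu x hx).exp).const_mul (2*q))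
    refine h1.congr_deriv ?_
    ring
  have hEconst : ∀ x ∈ s, E x = E 0 := by
    apply constant_of_derivWithin_zero
    · exact fun x hx => (HE x hx).differentiableWithinAt
    · intro x hx
      exact (HE x (Set.mem_Icc_of_Ico hx)).derivWithin (hsu x (Set.mem_Icc_of_Ico hx))
  have henergy : ∀ x ∈ s, u' x * u' x + 2*q*Real.exp (u x) = 2*q*Real.exp (u 0) := by
    intro x hx
    have h := hEconst x hx
    simp only [hEdef] at h
    rw [h, hbc0]; ring
  -- the parameter μ
  have hpos : 0 < q * Real.exp (u 0) / 2 := by positivity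
  set μ := Real.sqrt (q * Real.exp (u 0) / 2) with hμdef
  have hμpos : 0 < μ := Real.sqrt_pos.mpr hpos
  have hμsq : μ^2 = q * Real.exp (u 0) / 2 := Real.sq_sqrt hpos.le
  -- w = exp(-u/2), P = w'
  set w : ℝ → ℝ := fun y => Real.exp (-u y / 2) with hwdef
  set P : ℝ → ℝ := fun y => Real.exp (-u y / 2) * (-(u' y)/2) with hPdef
  have Hw : ∀ x ∈ s, HasDerivWithinAt w (P x) s x := by
    intro x hx
    exact ((Hu x hx).neg.div_const 2).exp
  have HP : ∀ x ∈ s, HasDerivWithinAt P (μ^2 * w x) s x := by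
    intro x hx
    have h1 := (Hw x hx).mul ((Hu' x hx).neg.div_const 2)
    refine h1.congr_deriv ?_
    have hE := henergy x hx
    simp only [hPdef, hwdef, Pi.neg_apply]
    nlinarith [Real.exp_pos (-u x / 2), hμsq, hE]
  -- the two first integrals a and b
  set A : ℝ → ℝ := fun y => Real.exp (-(μ*y)) * (P y + μ * w y) with hAdef
  set B : ℝ → ℝ := fun y => Real.exp (μ*y) * (P y - μ * w y) with hBdef
  have Hexpn : ∀ x : ℝ, HasDerivWithinAt (fun y => Real.exp (-(μ*y))) (Real.exp (-(μ*x)) * (-μ)) s x := by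
    intro x
    have h : HasDerivWithinAt (fun y => -(μ*y)) (-μ) s x := by
      exact (((hasDerivAt_id x).const_mul μ).neg).hasDerivWithinAt.congr_deriv (by simp)
    exact h.exp
  have Hexpp : ∀ x : ℝ, HasDerivWithinAt (fun y => Real.exp (μ*y)) (Real.exp (μ*x) * μ) s x := by
    intro x
    have h : HasDerivWithinAt (fun y => μ*y) μ s x := by
      simpa using ((hasDerivAt_id x).const_mul μ).hasDerivWithinAt
    exact h.exp
  have HA : ∀ x ∈ s, HasDerivWithinAt A 0 s x := by
    intro x hx
    have h1 := (Hexpn x).mul ((HP x hx).add ((Hw x hx).const_mul μ))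
    refine h1.congr_deriv ?_
    simp only [Pi.add_apply, Pi.sub_apply]
    ring
  have HB : ∀ x ∈ s, HasDerivWithinAt B 0 s x := by
    intro x hx
    have h1 := (Hexpp x).mul ((HP x hx).sub ((Hw x hx).const_mul μ))
    refine h1.congr_deriv ?_
    simp only [Pi.add_apply, Pi.sub_apply]
    ring
  have hAconst : ∀ x ∈ s, A x = A 0 := by
    apply constant_of_derivWithin_zero
    · exact fun x hx => (HA x hx).differentiableWithinAt
    · intro x hx
      exact (HA x (Set.mem_Icc_of_Ico hx)).derivWithin (hsu x (Set.mem_Icc_of_Ico hx))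
  have hBconst : ∀ x ∈ s, B x = B 0 := by
    apply constant_of_derivWithin_zero
    · exact fun x hx => (HB x hx).differentiableWithinAt
    · intro x hx
      exact (HB x (Set.mem_Icc_of_Ico hx)).derivWithin (hsu x (Set.mem_Icc_of_Ico hx))
  have hA0 : A 0 = μ * w 0 := by
    simp only [hAdef, hPdef, hwdef]
    rw [show u' 0 = 0 from hbc0]
    simp
  have hB0 : B 0 = -(μ * w 0) := by
    simp only [hBdef, hPdef, hwdef]
    rw [show u' 0 = 0 from hbc0]
    simp
  -- solve for w
  have hwx : ∀ x ∈ s, w x = w 0 * Real.cosh (μ * x) := by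
    intro x hx
    have e1 : Real.exp (-(μ*x)) * (P x + μ * w x) = μ * w 0 := by
      rw [← hA0]; exact hAconst x hx
    have e2 : Real.exp (μ*x) * (P x - μ * w x) = -(μ * w 0) := by
      rw [← hB0]; exact hBconst x hx
    have hx1 : Real.exp (μ*x) * Real.exp (-(μ*x)) = 1 := by
      rw [← Real.exp_add]; simp
    have key : μ * w x = μ * (w 0 * Real.cosh (μ * x)) := by
      rw [Real.cosh_eq]
      linear_combination (Real.exp (μ*x)/2) * e1 - (Real.exp (-(μ*x))/2) * e2 - (μ * w x) * hx1
    exact mul_left_cancel₀ (ne_of_gt hμpos) key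
  -- recover u
  have hform : ∀ x ∈ s, u x = u 0 - 2 * Real.log (Real.cosh (μ * x)) := by
    intro x hx
    have h := hwx x hx
    have hcosh : 0 < Real.cosh (μ * x) := Real.cosh_pos _
    have h2 := congrArg Real.log h
    simp only [hwdef] at h2
    rw [Real.log_exp, Real.log_mul (Real.exp_ne_zero _) (ne_of_gt hcosh), Real.log_exp] at h2
    linarith
  have hu0 : u 0 = Real.log (2 * μ^2 / q) := by
    have h1 : 2 * μ^2 / q = Real.exp (u 0) := by
      rw [hμsq]; field_simp
    rw [h1, Real.log_exp]
  have hform' : ∀ x ∈ s, u x = Real.log (2 * μ^2 / q) - 2 * Real.log (Real.cosh (μ * x)) := by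
    intro x hx
    rw [hform x hx, hu0]
  -- the transcendental equation for μ
  have hcoshμ : Real.cosh μ = Real.sqrt (2 / q) * μ := by
    have h1 := hform 1 h1s
    rw [hbc1, mul_one] at h1
    have h2 : Real.log (Real.cosh μ) = u 0 / 2 := by linarith
    have h3 : Real.cosh μ = Real.exp (u 0 / 2) := by
      rw [← h2, Real.exp_log (Real.cosh_pos _)]
    have h4 : (Real.cosh μ)^2 = 2 / q * μ^2 := by
      rw [h3, ← Real.exp_nat_mul]
      norm_num
      rw [hμsq]
      field_simp
    have h5 : Real.cosh μ = Real.sqrt (2 / q * μ^2) := by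
      rw [← h4, Real.sqrt_sq (Real.cosh_pos _).le]
    rw [h5, Real.sqrt_mul (by positivity : (0:ℝ) ≤ 2/q), Real.sqrt_sq hμpos.le]
  exact ⟨μ, hμpos, hcoshμ, hform'⟩
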